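/- Let G be a finite commutative group and π a pairing on G. Let A = MonoidAlgebra ℂ G and let R̊ ∈ A ⊗[ℂ] A be the element R̊ = |G|⁻¹ • Σ_{g,h ∈ G} ((π g h)⁻¹ : ℂ) • (g ⊗ₜ h). Then in A ⊗[ℂ] A ⊗[ℂ] A one has (Δ ⊗ id)(R̊) = R̊¹³ · R̊²³ and (id ⊗ Δ)(R̊) = R̊¹³ · R̊¹², where Δ is the comultiplication of A, R̊¹³ = |G|⁻¹ • Σ_{g,h} ((π g h)⁻¹) • (g ⊗ₜ 1 ⊗ₜ h), R̊²³ = |G|⁻¹ • Σ_{g,h} ((π g h)⁻¹) • (1 ⊗ₜ g ⊗ₜ h), R̊¹² = |G|⁻¹ • Σ_{g,h} ((π g h)⁻¹) • (g ⊗ₜ h ⊗ₜ 1), and the products are taken in the tensor-product algebra A ⊗ A ⊗ A. -/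

import Mathlib

open scoped TensorProduct

/-- The element `R̊ = |G|⁻¹ ∑_{g,h} π(g,h)⁻¹ g ⊗ h` of `ℂ[G] ⊗ ℂ[G]`. -/
noncomputable def Rcirc (G : Type*) [CommGroup G] [Fintype G] (π : G → G → ℂˣ) :
    MonoidAlgebra ℂ G ⊗[ℂ] MonoidAlgebra ℂ G :=
  (Fintype.card G : ℂ)⁻¹ •
    ∑ g : G, ∑ h : G, ((π g h : ℂ))⁻¹ •
      (MonoidAlgebra.single g (1 : ℂ) ⊗ₜ[ℂ] MonoidAlgebra.single h (1 : ℂ))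

/-- The comultiplication of the group algebra `ℂ[G]`, the linear map determined by
`Δ(g) = g ⊗ g` on group elements. -/
noncomputable def comulGA (G : Type*) [CommGroup G] :
    MonoidAlgebra ℂ G →ₗ[ℂ] MonoidAlgebra ℂ G ⊗[ℂ] MonoidAlgebra ℂ G :=
  (Finsupp.lsum ℂ fun g => LinearMap.toSpanSingleton ℂ _
    (MonoidAlgebra.single g (1 : ℂ) ⊗ₜ[ℂ] MonoidAlgebra.single g (1 : ℂ))) ∘ₗ
    (MonoidAlgebra.coeffLinearEquiv (S := ℂ) ℂ).toLinearMap

section aux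
variable {G : Type*} [CommGroup G] [Fintype G] (π : G → G → ℂˣ)

set_option linter.unusedSectionVars false in
lemma pi_one_left (hmul_left : ∀ g h k : G, π (g * h) k = π g k * π h k) (h : G) :
    π 1 h = 1 := by
  have := hmul_left 1 1 h
  simp only [one_mul] at this
  exact (left_eq_mul.mp this)

lemma pi_inv_left (hmul_left : ∀ g h k : G, π (g * h) k = π g k * π h k) (g h : G) :
    π g⁻¹ h = (π g h)⁻¹ := by
  apply eq_inv_of_mul_eq_one_left
  rw [← hmul_left, inv_mul_cancel, pi_one_left π hmul_left]

lemma pi_ortho (hmul_left : ∀ g h k : G, π (g * h) k = π g k * π h k)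
    (hmul_right : ∀ g h k : G, π g (h * k) = π g h * π g k)
    (hnondeg : ∀ g : G, (∀ h : G, π g h = 1) → g = 1) (a : G) [DecidableEq G] :
    ∑ h : G, ((π a h : ℂ)) = if a = 1 then (Fintype.card G : ℂ) else 0 := by
  by_cases ha : a = 1
  · subst ha
    simp [pi_one_left π hmul_left, Finset.card_univ]
  · obtain ⟨h0, hh0⟩ : ∃ h, π a h ≠ 1 := by
      by_contra hc; push_neg at hc; exact ha (hnondeg a hc)
    rw [if_neg ha]
    have hS : ((π a h0 : ℂ)) * ∑ h : G, ((π a h : ℂ)) = ∑ h : G, ((π a h : ℂ)) := by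
      rw [Finset.mul_sum]
      calc ∑ h : G, ((π a h0 : ℂ)) * ((π a h : ℂ))
          = ∑ h : G, ((π a (h0 * h) : ℂ)) := by
            refine Finset.sum_congr rfl fun h _ => ?_
            rw [hmul_right]; push_cast; ring
        _ = ∑ h : G, ((π a h : ℂ)) := by simpa using Equiv.sum_comp (Equiv.mulLeft h0) (fun h => ((π a h : ℂ)))
    have hne : ((π a h0 : ℂ)) - 1 ≠ 0 := by
      refine sub_ne_zero.mpr fun hc => hh0 (Units.ext ?_)
      simpa using hc
    have : (((π a h0 : ℂ)) - 1) * ∑ h : G, ((π a h : ℂ)) = 0 := by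
      rw [sub_mul, one_mul, hS, sub_self]
    exact (mul_eq_zero.mp this).resolve_left hne

end aux

section aux2
variable {G : Type*} [CommGroup G] [Fintype G] [DecidableEq G] (π : G → G → ℂˣ)

lemma pi_inv_right (hmul_right : ∀ g h k : G, π g (h * k) = π g h * π g k) (g h : G) :
    π g h⁻¹ = (π g h)⁻¹ := by
  apply eq_inv_of_mul_eq_one_left
  rw [← hmul_right, inv_mul_cancel]
  have := hmul_right g 1 1
  simp only [one_mul] at this
  exact left_eq_mul.mp this

lemma delta1 (hmul_left : ∀ g h k : G, π (g * h) k = π g k * π h k)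
    (hmul_right : ∀ g h k : G, π g (h * k) = π g h * π g k)
    (hnondeg : ∀ g : G, (∀ h : G, π g h = 1) → g = 1) (g g' k : G) :
    ∑ h : G, ((π g h : ℂ))⁻¹ * ((π g' (h⁻¹ * k) : ℂ))⁻¹
      = if g' = g then (Fintype.card G : ℂ) * ((π g k : ℂ))⁻¹ else 0 := by
  have hterm : ∀ h : G, ((π g h : ℂ))⁻¹ * ((π g' (h⁻¹ * k) : ℂ))⁻¹
      = ((π (g⁻¹ * g') h : ℂ)) * ((π g' k : ℂ))⁻¹ := by
    intro h
    have u : (π g h)⁻¹ * (π g' (h⁻¹ * k))⁻¹ = π (g⁻¹ * g') h * (π g' k)⁻¹ := by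
      rw [hmul_right g' h⁻¹ k, pi_inv_right π hmul_right, hmul_left g⁻¹ g' h,
        pi_inv_left π hmul_left]
      group
      exact mul_right_comm _ _ _
    calc ((π g h : ℂ))⁻¹ * ((π g' (h⁻¹ * k) : ℂ))⁻¹
        = (((π g h)⁻¹ * (π g' (h⁻¹ * k))⁻¹ : ℂˣ) : ℂ) := by
          push_cast [Units.val_inv_eq_inv_val]; ring
      _ = ((π (g⁻¹ * g') h * (π g' k)⁻¹ : ℂˣ) : ℂ) := by rw [u]
      _ = ((π (g⁻¹ * g') h : ℂ)) * ((π g' k : ℂ))⁻¹ := by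
          push_cast [Units.val_inv_eq_inv_val]; ring
  rw [Finset.sum_congr rfl fun h _ => hterm h, ← Finset.sum_mul,
    pi_ortho π hmul_left hmul_right hnondeg]
  by_cases hgg : g' = g
  · subst hgg; simp
  · rw [if_neg (fun hc => hgg (inv_mul_eq_one.mp hc).symm), if_neg hgg, zero_mul]

lemma delta2 (hmul_left : ∀ g h k : G, π (g * h) k = π g k * π h k)
    (hmul_right : ∀ g h k : G, π g (h * k) = π g h * π g k)
    (hsymm : ∀ g h : G, π g h = π h g)
    (hnondeg : ∀ g : G, (∀ h : G, π g h = 1) → g = 1) (h h' m : G) :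
    ∑ g : G, ((π g h : ℂ))⁻¹ * ((π (g⁻¹ * m) h' : ℂ))⁻¹
      = if h' = h then (Fintype.card G : ℂ) * ((π m h : ℂ))⁻¹ else 0 := by
  have hterm : ∀ g : G, ((π g h : ℂ))⁻¹ * ((π (g⁻¹ * m) h' : ℂ))⁻¹
      = ((π (h⁻¹ * h') g : ℂ)) * ((π m h' : ℂ))⁻¹ := by
    intro g
    have u : (π g h)⁻¹ * (π (g⁻¹ * m) h')⁻¹ = π (h⁻¹ * h') g * (π m h')⁻¹ := by
      rw [hmul_left g⁻¹ m h', pi_inv_left π hmul_left, hsymm (h⁻¹ * h') g,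
        hmul_right g h⁻¹ h', pi_inv_right π hmul_right]
      group
      exact mul_right_comm _ _ _
    calc ((π g h : ℂ))⁻¹ * ((π (g⁻¹ * m) h' : ℂ))⁻¹
        = (((π g h)⁻¹ * (π (g⁻¹ * m) h')⁻¹ : ℂˣ) : ℂ) := by
          push_cast [Units.val_inv_eq_inv_val]; ring
      _ = ((π (h⁻¹ * h') g * (π m h')⁻¹ : ℂˣ) : ℂ) := by rw [u]
      _ = ((π (h⁻¹ * h') g : ℂ)) * ((π m h' : ℂ))⁻¹ := by
          push_cast [Units.val_inv_eq_inv_val]; ring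
  rw [Finset.sum_congr rfl fun g _ => hterm g, ← Finset.sum_mul,
    pi_ortho π hmul_left hmul_right hnondeg]
  by_cases hhh : h' = h
  · subst hhh; simp
  · rw [if_neg (fun hc => hhh (inv_mul_eq_one.mp hc).symm), if_neg hhh, zero_mul]

end aux2

lemma comulGA_single (G : Type*) [CommGroup G] (g : G) :
    comulGA G (MonoidAlgebra.single g (1 : ℂ)) =
      MonoidAlgebra.single g (1 : ℂ) ⊗ₜ[ℂ] MonoidAlgebra.single g (1 : ℂ) := by
  show (Finsupp.lsum ℂ (fun g : G => LinearMap.toSpanSingleton ℂ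
    (MonoidAlgebra ℂ G ⊗[ℂ] MonoidAlgebra ℂ G)
    (MonoidAlgebra.single g (1 : ℂ) ⊗ₜ[ℂ] MonoidAlgebra.single g (1 : ℂ))))
    (Finsupp.single g (1 : ℂ)) = _
  rw [Finsupp.lsum_single, LinearMap.toSpanSingleton_apply_one]


set_option maxHeartbeats 1000000 in
/-- `R̊` satisfies the Cartan-part `R`-matrix identities
`(Δ ⊗ 1)(R̊) = R̊¹³·R̊²³` and `(1 ⊗ Δ)(R̊) = R̊¹³·R̊¹²`. -/
theorem stmt_2 {G : Type*} [CommGroup G] [Fintype G]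
    (π : G → G → ℂˣ)
    (hmul_left : ∀ g h k : G, π (g * h) k = π g k * π h k)
    (hmul_right : ∀ g h k : G, π g (h * k) = π g h * π g k)
    (hsymm : ∀ g h : G, π g h = π h g)
    (hnondeg : ∀ g : G, (∀ h : G, π g h = 1) → g = 1) :
    (TensorProduct.map (comulGA G) LinearMap.id (Rcirc G π) =
      ((Fintype.card G : ℂ)⁻¹ •
          ∑ g : G, ∑ h : G, ((π g h : ℂ))⁻¹ •
            ((MonoidAlgebra.single g (1 : ℂ) ⊗ₜ[ℂ] (1 : MonoidAlgebra ℂ G)) ⊗ₜ[ℂ]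
              MonoidAlgebra.single h (1 : ℂ))) *
        ((Fintype.card G : ℂ)⁻¹ •
          ∑ g : G, ∑ h : G, ((π g h : ℂ))⁻¹ •
            (((1 : MonoidAlgebra ℂ G) ⊗ₜ[ℂ] MonoidAlgebra.single g (1 : ℂ)) ⊗ₜ[ℂ]
              MonoidAlgebra.single h (1 : ℂ)))) ∧
    (TensorProduct.map LinearMap.id (comulGA G) (Rcirc G π) =
      ((Fintype.card G : ℂ)⁻¹ •
          ∑ g : G, ∑ h : G, ((π g h : ℂ))⁻¹ •
            (MonoidAlgebra.single g (1 : ℂ) ⊗ₜ[ℂ]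
              ((1 : MonoidAlgebra ℂ G) ⊗ₜ[ℂ] MonoidAlgebra.single h (1 : ℂ)))) *
        ((Fintype.card G : ℂ)⁻¹ •
          ∑ g : G, ∑ h : G, ((π g h : ℂ))⁻¹ •
            (MonoidAlgebra.single g (1 : ℂ) ⊗ₜ[ℂ]
              (MonoidAlgebra.single h (1 : ℂ) ⊗ₜ[ℂ] (1 : MonoidAlgebra ℂ G))))) := by
  classical
  have hcard : (Fintype.card G : ℂ) ≠ 0 := Nat.cast_ne_zero.mpr Fintype.card_ne_zero
  have hcc : ((Fintype.card G : ℂ)⁻¹ * (Fintype.card G : ℂ)⁻¹) * (Fintype.card G : ℂ)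
      = (Fintype.card G : ℂ)⁻¹ := by field_simp
  constructor
  · rw [Rcirc, smul_mul_smul_comm, map_smul]
    simp only [map_sum, map_smul, TensorProduct.map_tmul, comulGA_single,
      LinearMap.id_coe, id_eq]
    have expand : (∑ g : G, ∑ h : G, ((π g h : ℂ))⁻¹ •
          ((MonoidAlgebra.single g (1:ℂ) ⊗ₜ[ℂ] (1 : MonoidAlgebra ℂ G)) ⊗ₜ[ℂ]
            MonoidAlgebra.single h (1:ℂ))) *
        (∑ g : G, ∑ h : G, ((π g h : ℂ))⁻¹ •
          (((1 : MonoidAlgebra ℂ G) ⊗ₜ[ℂ] MonoidAlgebra.single g (1:ℂ)) ⊗ₜ[ℂ]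
            MonoidAlgebra.single h (1:ℂ)))
        = ∑ g : G, ∑ g' : G, ∑ h : G, ∑ h' : G,
            (((π g h : ℂ))⁻¹ * ((π g' h' : ℂ))⁻¹) •
              ((MonoidAlgebra.single g (1:ℂ) ⊗ₜ[ℂ] MonoidAlgebra.single g' (1:ℂ)) ⊗ₜ[ℂ]
                MonoidAlgebra.single (h * h') (1:ℂ)) := by
      rw [Finset.sum_mul_sum Finset.univ Finset.univ
        (fun g => ∑ h : G, ((π g h : ℂ))⁻¹ •
          ((MonoidAlgebra.single g (1:ℂ) ⊗ₜ[ℂ] (1 : MonoidAlgebra ℂ G)) ⊗ₜ[ℂ]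
            MonoidAlgebra.single h (1:ℂ)))
        (fun g => ∑ h : G, ((π g h : ℂ))⁻¹ •
          (((1 : MonoidAlgebra ℂ G) ⊗ₜ[ℂ] MonoidAlgebra.single g (1:ℂ)) ⊗ₜ[ℂ]
            MonoidAlgebra.single h (1:ℂ)))]
      refine Finset.sum_congr rfl fun g _ => Finset.sum_congr rfl fun g' _ => ?_
      rw [Finset.sum_mul_sum Finset.univ Finset.univ
        (fun h => ((π g h : ℂ))⁻¹ •
          ((MonoidAlgebra.single g (1:ℂ) ⊗ₜ[ℂ] (1 : MonoidAlgebra ℂ G)) ⊗ₜ[ℂ]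
            MonoidAlgebra.single h (1:ℂ)))
        (fun h' => ((π g' h' : ℂ))⁻¹ •
          (((1 : MonoidAlgebra ℂ G) ⊗ₜ[ℂ] MonoidAlgebra.single g' (1:ℂ)) ⊗ₜ[ℂ]
            MonoidAlgebra.single h' (1:ℂ)))]
      refine Finset.sum_congr rfl fun h _ => Finset.sum_congr rfl fun h' _ => ?_
      rw [smul_mul_smul_comm, Algebra.TensorProduct.tmul_mul_tmul,
        Algebra.TensorProduct.tmul_mul_tmul]
      simp only [one_mul, mul_one, MonoidAlgebra.single_mul_single]
    rw [expand]
    have key : ∀ g : G, (∑ g' : G, ∑ h : G, ∑ h' : G,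
          (((π g h : ℂ))⁻¹ * ((π g' h' : ℂ))⁻¹) •
            ((MonoidAlgebra.single g (1:ℂ) ⊗ₜ[ℂ] MonoidAlgebra.single g' (1:ℂ)) ⊗ₜ[ℂ]
              MonoidAlgebra.single (h * h') (1:ℂ)))
        = (Fintype.card G : ℂ) • ∑ k : G, ((π g k : ℂ))⁻¹ •
            ((MonoidAlgebra.single g (1:ℂ) ⊗ₜ[ℂ] MonoidAlgebra.single g (1:ℂ)) ⊗ₜ[ℂ]
              MonoidAlgebra.single k (1:ℂ)) := by
      intro g
      calc (∑ g' : G, ∑ h : G, ∑ h' : G,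
            (((π g h : ℂ))⁻¹ * ((π g' h' : ℂ))⁻¹) •
              ((MonoidAlgebra.single g (1:ℂ) ⊗ₜ[ℂ] MonoidAlgebra.single g' (1:ℂ)) ⊗ₜ[ℂ]
                MonoidAlgebra.single (h * h') (1:ℂ)))
          = ∑ g' : G, ∑ h : G, ∑ k : G,
            (((π g h : ℂ))⁻¹ * ((π g' (h⁻¹ * k) : ℂ))⁻¹) •
              ((MonoidAlgebra.single g (1:ℂ) ⊗ₜ[ℂ] MonoidAlgebra.single g' (1:ℂ)) ⊗ₜ[ℂ]
                MonoidAlgebra.single k (1:ℂ)) := by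
            refine Finset.sum_congr rfl fun g' _ => Finset.sum_congr rfl fun h _ => ?_
            exact Fintype.sum_equiv (Equiv.mulLeft h) _ _ (fun h' => by
              simp [inv_mul_cancel_left])
        _ = ∑ g' : G, ∑ k : G,
            (∑ h : G, ((π g h : ℂ))⁻¹ * ((π g' (h⁻¹ * k) : ℂ))⁻¹) •
              ((MonoidAlgebra.single g (1:ℂ) ⊗ₜ[ℂ] MonoidAlgebra.single g' (1:ℂ)) ⊗ₜ[ℂ]
                MonoidAlgebra.single k (1:ℂ)) := by
            refine Finset.sum_congr rfl fun g' _ => ?_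
            rw [Finset.sum_comm]
            exact Finset.sum_congr rfl fun k _ => (Finset.sum_smul).symm
        _ = ∑ g' : G, ∑ k : G,
            (if g' = g then (Fintype.card G : ℂ) * ((π g k : ℂ))⁻¹ else 0) •
              ((MonoidAlgebra.single g (1:ℂ) ⊗ₜ[ℂ] MonoidAlgebra.single g' (1:ℂ)) ⊗ₜ[ℂ]
                MonoidAlgebra.single k (1:ℂ)) := by
            refine Finset.sum_congr rfl fun g' _ => Finset.sum_congr rfl fun k _ => ?_
            rw [delta1 π hmul_left hmul_right hnondeg]
        _ = ∑ k : G, ((Fintype.card G : ℂ) * ((π g k : ℂ))⁻¹) •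
              ((MonoidAlgebra.single g (1:ℂ) ⊗ₜ[ℂ] MonoidAlgebra.single g (1:ℂ)) ⊗ₜ[ℂ]
                MonoidAlgebra.single k (1:ℂ)) := by
            rw [Finset.sum_comm]
            refine Finset.sum_congr rfl fun k _ => ?_
            simp only [ite_smul, zero_smul]
            exact Fintype.sum_ite_eq' g _
        _ = (Fintype.card G : ℂ) • ∑ k : G, ((π g k : ℂ))⁻¹ •
              ((MonoidAlgebra.single g (1:ℂ) ⊗ₜ[ℂ] MonoidAlgebra.single g (1:ℂ)) ⊗ₜ[ℂ]
                MonoidAlgebra.single k (1:ℂ)) := by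
            rw [Finset.smul_sum]
            exact Finset.sum_congr rfl fun k _ => (mul_smul _ _ _)
    rw [Finset.sum_congr rfl fun g _ => key g, ← Finset.smul_sum, smul_smul, hcc]
  · rw [Rcirc, smul_mul_smul_comm, map_smul]
    simp only [map_sum, map_smul, TensorProduct.map_tmul, comulGA_single,
      LinearMap.id_coe, id_eq]
    have expand : (∑ g : G, ∑ h : G, ((π g h : ℂ))⁻¹ •
          (MonoidAlgebra.single g (1:ℂ) ⊗ₜ[ℂ]
            ((1 : MonoidAlgebra ℂ G) ⊗ₜ[ℂ] MonoidAlgebra.single h (1:ℂ)))) *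
        (∑ g : G, ∑ h : G, ((π g h : ℂ))⁻¹ •
          (MonoidAlgebra.single g (1:ℂ) ⊗ₜ[ℂ]
            (MonoidAlgebra.single h (1:ℂ) ⊗ₜ[ℂ] (1 : MonoidAlgebra ℂ G))))
        = ∑ g : G, ∑ g' : G, ∑ h : G, ∑ h' : G,
            (((π g h : ℂ))⁻¹ * ((π g' h' : ℂ))⁻¹) •
              (MonoidAlgebra.single (g * g') (1:ℂ) ⊗ₜ[ℂ]
                (MonoidAlgebra.single h' (1:ℂ) ⊗ₜ[ℂ] MonoidAlgebra.single h (1:ℂ))) := by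
      rw [Finset.sum_mul_sum Finset.univ Finset.univ
        (fun g => ∑ h : G, ((π g h : ℂ))⁻¹ •
          (MonoidAlgebra.single g (1:ℂ) ⊗ₜ[ℂ]
            ((1 : MonoidAlgebra ℂ G) ⊗ₜ[ℂ] MonoidAlgebra.single h (1:ℂ))))
        (fun g => ∑ h : G, ((π g h : ℂ))⁻¹ •
          (MonoidAlgebra.single g (1:ℂ) ⊗ₜ[ℂ]
            (MonoidAlgebra.single h (1:ℂ) ⊗ₜ[ℂ] (1 : MonoidAlgebra ℂ G))))]
      refine Finset.sum_congr rfl fun g _ => Finset.sum_congr rfl fun g' _ => ?_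
      rw [Finset.sum_mul_sum Finset.univ Finset.univ
        (fun h => ((π g h : ℂ))⁻¹ •
          (MonoidAlgebra.single g (1:ℂ) ⊗ₜ[ℂ]
            ((1 : MonoidAlgebra ℂ G) ⊗ₜ[ℂ] MonoidAlgebra.single h (1:ℂ))))
        (fun h' => ((π g' h' : ℂ))⁻¹ •
          (MonoidAlgebra.single g' (1:ℂ) ⊗ₜ[ℂ]
            (MonoidAlgebra.single h' (1:ℂ) ⊗ₜ[ℂ] (1 : MonoidAlgebra ℂ G))))]
      refine Finset.sum_congr rfl fun h _ => Finset.sum_congr rfl fun h' _ => ?_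
      rw [smul_mul_smul_comm, Algebra.TensorProduct.tmul_mul_tmul,
        Algebra.TensorProduct.tmul_mul_tmul]
      simp only [one_mul, mul_one, MonoidAlgebra.single_mul_single]
    rw [expand]
    have key2 : (∑ g : G, ∑ g' : G, ∑ h : G, ∑ h' : G,
          (((π g h : ℂ))⁻¹ * ((π g' h' : ℂ))⁻¹) •
            (MonoidAlgebra.single (g * g') (1:ℂ) ⊗ₜ[ℂ]
              (MonoidAlgebra.single h' (1:ℂ) ⊗ₜ[ℂ] MonoidAlgebra.single h (1:ℂ))))
        = (Fintype.card G : ℂ) • ∑ m : G, ∑ h : G, ((π m h : ℂ))⁻¹ •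
            (MonoidAlgebra.single m (1:ℂ) ⊗ₜ[ℂ]
              (MonoidAlgebra.single h (1:ℂ) ⊗ₜ[ℂ] MonoidAlgebra.single h (1:ℂ))) := by
      calc (∑ g : G, ∑ g' : G, ∑ h : G, ∑ h' : G,
            (((π g h : ℂ))⁻¹ * ((π g' h' : ℂ))⁻¹) •
              (MonoidAlgebra.single (g * g') (1:ℂ) ⊗ₜ[ℂ]
                (MonoidAlgebra.single h' (1:ℂ) ⊗ₜ[ℂ] MonoidAlgebra.single h (1:ℂ))))
          = ∑ g : G, ∑ m : G, ∑ h : G, ∑ h' : G,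
            (((π g h : ℂ))⁻¹ * ((π (g⁻¹ * m) h' : ℂ))⁻¹) •
              (MonoidAlgebra.single m (1:ℂ) ⊗ₜ[ℂ]
                (MonoidAlgebra.single h' (1:ℂ) ⊗ₜ[ℂ] MonoidAlgebra.single h (1:ℂ))) := by
            refine Finset.sum_congr rfl fun g _ => ?_
            exact Fintype.sum_equiv (Equiv.mulLeft g) _ _ (fun g' => by
              simp [inv_mul_cancel_left])
        _ = ∑ m : G, ∑ h : G, ∑ h' : G, ∑ g : G,
            (((π g h : ℂ))⁻¹ * ((π (g⁻¹ * m) h' : ℂ))⁻¹) •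
              (MonoidAlgebra.single m (1:ℂ) ⊗ₜ[ℂ]
                (MonoidAlgebra.single h' (1:ℂ) ⊗ₜ[ℂ] MonoidAlgebra.single h (1:ℂ))) := by
            rw [Finset.sum_comm]
            refine Finset.sum_congr rfl fun m _ => ?_
            rw [Finset.sum_comm]
            refine Finset.sum_congr rfl fun h _ => ?_
            rw [Finset.sum_comm]
        _ = ∑ m : G, ∑ h : G, ∑ h' : G,
            (∑ g : G, ((π g h : ℂ))⁻¹ * ((π (g⁻¹ * m) h' : ℂ))⁻¹) •
              (MonoidAlgebra.single m (1:ℂ) ⊗ₜ[ℂ]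
                (MonoidAlgebra.single h' (1:ℂ) ⊗ₜ[ℂ] MonoidAlgebra.single h (1:ℂ))) := by
            refine Finset.sum_congr rfl fun m _ => Finset.sum_congr rfl fun h _ =>
              Finset.sum_congr rfl fun h' _ => (Finset.sum_smul).symm
        _ = ∑ m : G, ∑ h : G, ∑ h' : G,
            (if h' = h then (Fintype.card G : ℂ) * ((π m h : ℂ))⁻¹ else 0) •
              (MonoidAlgebra.single m (1:ℂ) ⊗ₜ[ℂ]
                (MonoidAlgebra.single h' (1:ℂ) ⊗ₜ[ℂ] MonoidAlgebra.single h (1:ℂ))) := by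
            refine Finset.sum_congr rfl fun m _ => Finset.sum_congr rfl fun h _ =>
              Finset.sum_congr rfl fun h' _ => ?_
            rw [delta2 π hmul_left hmul_right hsymm hnondeg]
        _ = ∑ m : G, ∑ h : G, ((Fintype.card G : ℂ) * ((π m h : ℂ))⁻¹) •
              (MonoidAlgebra.single m (1:ℂ) ⊗ₜ[ℂ]
                (MonoidAlgebra.single h (1:ℂ) ⊗ₜ[ℂ] MonoidAlgebra.single h (1:ℂ))) := by
            refine Finset.sum_congr rfl fun m _ => Finset.sum_congr rfl fun h _ => ?_
            simp only [ite_smul, zero_smul]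
            exact Fintype.sum_ite_eq' h _
        _ = (Fintype.card G : ℂ) • ∑ m : G, ∑ h : G, ((π m h : ℂ))⁻¹ •
              (MonoidAlgebra.single m (1:ℂ) ⊗ₜ[ℂ]
                (MonoidAlgebra.single h (1:ℂ) ⊗ₜ[ℂ] MonoidAlgebra.single h (1:ℂ))) := by
            rw [Finset.smul_sum]
            refine Finset.sum_congr rfl fun m _ => ?_
            rw [Finset.smul_sum]
            exact Finset.sum_congr rfl fun h _ => (mul_smul _ _ _)
    rw [key2, smul_smul, hcc]
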